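/- Let σ : ℝ → ℝ and c > 0. Let L̂ : ℝ³ → ℝ (arguments (x,y,t)) be twice continuously differentiable with L̂_y(x,y,t) ≠ 0 everywhere, satisfying the quasilinear equation L̂_t + (σ(x)²/2)·(L̂_{xx} − 2·(L̂_x/L̂_y)·L̂_{xy} + (L̂_x²/L̂_y²)·L̂_{yy}) − (σ(x)²/(2c))·L̂_x²/L̂_y = 0 at every point. Let ŵ : ℝ³ → ℝ be three times continuously differentiable and satisfy ŵ_t + (σ(x)²/2)·ŵ_{xx} = (σ(x)²/(2c))·L̂_x²/L̂_y at every point, and set L̃ := ŵ + c·∂_y ŵ. Then the difference satisfies the linear heat-type equation ∂_t(L̂ − L̃) + (σ(x)²/2)·∂_{xx}(L̂ − L̃) = 0 at every point. (Step 4 of the paper's regularity theorem, showing L̂ − L̃ solves a heat equation with zero terminal data.) -/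

import Mathlib

section helpers
variable (G : ℝ × ℝ × ℝ → ℝ)

lemma curve1 (x y t : ℝ) : HasDerivAt (fun a : ℝ => ((a, y, t) : ℝ × ℝ × ℝ)) (1, 0, 0) x :=
  (hasDerivAt_id x).prodMk (hasDerivAt_const x (y, t))

lemma curve2 (x y t : ℝ) : HasDerivAt (fun b : ℝ => ((x, b, t) : ℝ × ℝ × ℝ)) (0, 1, 0) y :=
  (hasDerivAt_const y x).prodMk ((hasDerivAt_id y).prodMk (hasDerivAt_const y t))

lemma curve3 (x y t : ℝ) : HasDerivAt (fun s : ℝ => ((x, y, s) : ℝ × ℝ × ℝ)) (0, 0, 1) t :=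
  (hasDerivAt_const t x).prodMk ((hasDerivAt_const t y).prodMk (hasDerivAt_id t))

lemma hd1 (x y t : ℝ) (hG : DifferentiableAt ℝ G (x, y, t)) :
    HasDerivAt (fun a => G (a, y, t)) (fderiv ℝ G (x, y, t) (1, 0, 0)) x := by
  exact hG.hasFDerivAt.comp_hasDerivAt x (curve1 x y t)

lemma hd2 (x y t : ℝ) (hG : DifferentiableAt ℝ G (x, y, t)) :
    HasDerivAt (fun b => G (x, b, t)) (fderiv ℝ G (x, y, t) (0, 1, 0)) y := by
  exact hG.hasFDerivAt.comp_hasDerivAt y (curve2 x y t)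

lemma hd3 (x y t : ℝ) (hG : DifferentiableAt ℝ G (x, y, t)) :
    HasDerivAt (fun s => G (x, y, s)) (fderiv ℝ G (x, y, t) (0, 0, 1)) t := by
  exact hG.hasFDerivAt.comp_hasDerivAt t (curve3 x y t)

lemma hfd_ev (hG : ContDiff ℝ 2 G) (v : ℝ × ℝ × ℝ) (p : ℝ × ℝ × ℝ) :
    HasFDerivAt (fun q => fderiv ℝ G q v)
      ((ContinuousLinearMap.apply ℝ ℝ v).comp (fderiv ℝ (fderiv ℝ G) p)) p := by
  have hG' : Differentiable ℝ (fderiv ℝ G) :=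
    (hG.fderiv_right (m := 1) le_rfl).differentiable one_ne_zero
  exact (ContinuousLinearMap.apply ℝ ℝ v).hasFDerivAt.comp p (hG' p).hasFDerivAt

lemma fderiv_ev (hG : ContDiff ℝ 2 G) (v p w : ℝ × ℝ × ℝ) :
    fderiv ℝ (fun q => fderiv ℝ G q v) p w = fderiv ℝ (fderiv ℝ G) p w v := by
  rw [(hfd_ev G hG v p).fderiv]; rfl

lemma symm2 (hG : ContDiff ℝ 2 G) (p v w : ℝ × ℝ × ℝ) :
    fderiv ℝ (fderiv ℝ G) p v w = fderiv ℝ (fderiv ℝ G) p w v := by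
  have hG' : Differentiable ℝ (fderiv ℝ G) :=
    (hG.fderiv_right (m := 1) le_rfl).differentiable one_ne_zero
  exact second_derivative_symmetric
    (fun q => ((hG.differentiable two_ne_zero) q).hasFDerivAt) (hG' p).hasFDerivAt v w

lemma hd_ev1 (hG : ContDiff ℝ 2 G) (v : ℝ × ℝ × ℝ) (x y t : ℝ) :
    HasDerivAt (fun a => fderiv ℝ G (a, y, t) v)
      (fderiv ℝ (fderiv ℝ G) (x, y, t) (1, 0, 0) v) x := by
  exact (hfd_ev G hG v (x, y, t)).comp_hasDerivAt x (curve1 x y t)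

lemma hd_ev2 (hG : ContDiff ℝ 2 G) (v : ℝ × ℝ × ℝ) (x y t : ℝ) :
    HasDerivAt (fun b => fderiv ℝ G (x, b, t) v)
      (fderiv ℝ (fderiv ℝ G) (x, y, t) (0, 1, 0) v) y := by
  exact (hfd_ev G hG v (x, y, t)).comp_hasDerivAt y (curve2 x y t)

lemma hd_ev3 (hG : ContDiff ℝ 2 G) (v : ℝ × ℝ × ℝ) (x y t : ℝ) :
    HasDerivAt (fun s => fderiv ℝ G (x, y, s) v)
      (fderiv ℝ (fderiv ℝ G) (x, y, t) (0, 0, 1) v) t := by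
  exact (hfd_ev G hG v (x, y, t)).comp_hasDerivAt t (curve3 x y t)

end helpers


/-- First partial derivative in the 1st argument of a function of three real variables. -/
noncomputable def p1 (f : ℝ → ℝ → ℝ → ℝ) (x y t : ℝ) : ℝ := deriv (fun a => f a y t) x
/-- First partial derivative in the 2nd argument. -/
noncomputable def p2 (f : ℝ → ℝ → ℝ → ℝ) (x y t : ℝ) : ℝ := deriv (fun b => f x b t) y
/-- First partial derivative in the 3rd argument. -/
noncomputable def p3 (f : ℝ → ℝ → ℝ → ℝ) (x y t : ℝ) : ℝ := deriv (fun s => f x y s) t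
/-- Second partial derivative in the 1st argument. -/
noncomputable def p11 (f : ℝ → ℝ → ℝ → ℝ) : ℝ → ℝ → ℝ → ℝ := p1 (p1 f)
/-- Mixed second partial derivative (first in the 1st, then in the 2nd argument). -/
noncomputable def p12 (f : ℝ → ℝ → ℝ → ℝ) : ℝ → ℝ → ℝ → ℝ := p2 (p1 f)
/-- Second partial derivative in the 2nd argument. -/
noncomputable def p22 (f : ℝ → ℝ → ℝ → ℝ) : ℝ → ℝ → ℝ → ℝ := p2 (p2 f)

/-- Step 4 of the regularity theorem: if the `C²` function `L̂(x,y,t)` with `L̂_y ≠ 0`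
satisfies the quasilinear equation
`L̂_t + (σ²/2)(L̂_{xx} − 2(L̂_x/L̂_y)L̂_{xy} + (L̂_x²/L̂_y²)L̂_{yy}) − (σ²/(2c))L̂_x²/L̂_y = 0`,
and the `C³` function `ŵ` satisfies `ŵ_t + (σ²/2)ŵ_{xx} = (σ²/(2c))L̂_x²/L̂_y`, then
with `L̃ := ŵ + c·∂_y ŵ` the difference solves the heat-type equation
`∂_t(L̂ − L̃) + (σ²/2)·∂_{xx}(L̂ − L̃) = 0` at every point. -/
theorem stmt_16
    (σ : ℝ → ℝ) (c : ℝ) (hc : 0 < c)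
    (Lh : ℝ → ℝ → ℝ → ℝ)
    (hLh : ContDiff ℝ 2 (fun p : ℝ × ℝ × ℝ => Lh p.1 p.2.1 p.2.2))
    (hLy : ∀ x y t : ℝ, p2 Lh x y t ≠ 0)
    (hPDEL : ∀ x y t : ℝ,
      p3 Lh x y t
        + σ x ^ 2 / 2
          * (p11 Lh x y t
            - 2 * (p1 Lh x y t / p2 Lh x y t) * p12 Lh x y t
            + (p1 Lh x y t) ^ 2 / (p2 Lh x y t) ^ 2 * p22 Lh x y t)
        - σ x ^ 2 / (2 * c) * (p1 Lh x y t) ^ 2 / p2 Lh x y t = 0)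
    (wh : ℝ → ℝ → ℝ → ℝ)
    (hwh : ContDiff ℝ 3 (fun p : ℝ × ℝ × ℝ => wh p.1 p.2.1 p.2.2))
    (hPDEw : ∀ x y t : ℝ,
      p3 wh x y t + σ x ^ 2 / 2 * p11 wh x y t
        = σ x ^ 2 / (2 * c) * (p1 Lh x y t) ^ 2 / p2 Lh x y t)
    (Lt : ℝ → ℝ → ℝ → ℝ)
    (hLtdef : ∀ x y t : ℝ, Lt x y t = wh x y t + c * p2 wh x y t) :
    ∀ x y t : ℝ,
      p3 (fun a b s => Lh a b s - Lt a b s) x y t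
        + σ x ^ 2 / 2 * p11 (fun a b s => Lh a b s - Lt a b s) x y t = 0 := by
  intro x y t
  set L : ℝ × ℝ × ℝ → ℝ := fun p => Lh p.1 p.2.1 p.2.2 with hLdef
  set W : ℝ × ℝ × ℝ → ℝ := fun p => wh p.1 p.2.1 p.2.2 with hWdef
  have hLd : Differentiable ℝ L := hLh.differentiable two_ne_zero
  have hW2 : ContDiff ℝ 2 W := hwh.of_le (by norm_num)
  have hWd : Differentiable ℝ W := hW2.differentiable two_ne_zero
  set G1 : ℝ × ℝ × ℝ → ℝ := fun q => fderiv ℝ W q (1, 0, 0) with hG1def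
  have hG1 : ContDiff ℝ 2 G1 := by
    exact (ContinuousLinearMap.apply ℝ ℝ ((1:ℝ), (0:ℝ), (0:ℝ))).contDiff.comp
      (hwh.fderiv_right (m := 2) le_rfl)
  -- first-order representations
  have rp1L : ∀ a b s : ℝ, p1 Lh a b s = fderiv ℝ L (a, b, s) (1, 0, 0) :=
    fun a b s => (hd1 L a b s (hLd _)).deriv
  have rp2L : ∀ a b s : ℝ, p2 Lh a b s = fderiv ℝ L (a, b, s) (0, 1, 0) :=
    fun a b s => (hd2 L a b s (hLd _)).deriv
  have rp2w : ∀ a b s : ℝ, p2 wh a b s = fderiv ℝ W (a, b, s) (0, 1, 0) :=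
    fun a b s => (hd2 W a b s (hWd _)).deriv
  have rp3w : ∀ a b s : ℝ, p3 wh a b s = fderiv ℝ W (a, b, s) (0, 0, 1) :=
    fun a b s => (hd3 W a b s (hWd _)).deriv
  have rp1w : ∀ a b s : ℝ, p1 wh a b s = G1 (a, b, s) :=
    fun a b s => (hd1 W a b s (hWd _)).deriv
  have rp11w : ∀ a b s : ℝ, p11 wh a b s = fderiv ℝ G1 (a, b, s) (1, 0, 0) := by
    intro a b s
    have h1 : (fun a' => p1 wh a' b s) = fun a' => G1 (a', b, s) :=
      funext fun a' => rp1w a' b s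
    show deriv (fun a' => p1 wh a' b s) a = _
    rw [h1]
    exact (hd1 G1 a b s ((hG1.differentiable two_ne_zero) _)).deriv
  -- Part A : time derivative of the difference
  have hA1 : HasDerivAt (fun s => Lh x y s) (fderiv ℝ L (x, y, t) (0, 0, 1)) t :=
    hd3 L x y t (hLd _)
  have hA2 : HasDerivAt (fun s => Lt x y s)
      (fderiv ℝ W (x, y, t) (0, 0, 1)
        + c * fderiv ℝ (fderiv ℝ W) (x, y, t) (0, 0, 1) (0, 1, 0)) t := by
    have hfun : (fun s => Lt x y s)
        = fun s => wh x y s + c * fderiv ℝ W (x, y, s) (0, 1, 0) := by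
      funext s; rw [hLtdef, rp2w]
    rw [hfun]
    exact (hd3 W x y t (hWd _)).add ((hd_ev3 W hW2 (0, 1, 0) x y t).const_mul c)
  have eqA : p3 (fun a b s => Lh a b s - Lt a b s) x y t
      = fderiv ℝ L (x, y, t) (0, 0, 1)
        - (fderiv ℝ W (x, y, t) (0, 0, 1)
          + c * fderiv ℝ (fderiv ℝ W) (x, y, t) (0, 0, 1) (0, 1, 0)) :=
    (hA1.sub hA2).deriv
  -- Part B : second x-derivative of the difference
  have hB : ∀ a : ℝ, HasDerivAt (fun a' => Lh a' y t - Lt a' y t)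
      (fderiv ℝ L (a, y, t) (1, 0, 0)
        - (fderiv ℝ W (a, y, t) (1, 0, 0)
          + c * fderiv ℝ (fderiv ℝ W) (a, y, t) (1, 0, 0) (0, 1, 0))) a := by
    intro a
    have hfun : (fun a' => Lt a' y t)
        = fun a' => wh a' y t + c * fderiv ℝ W (a', y, t) (0, 1, 0) := by
      funext a'; rw [hLtdef, rp2w]
    have h2 : HasDerivAt (fun a' => Lt a' y t)
        (fderiv ℝ W (a, y, t) (1, 0, 0)
          + c * fderiv ℝ (fderiv ℝ W) (a, y, t) (1, 0, 0) (0, 1, 0)) a := by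
      rw [hfun]
      exact (hd1 W a y t (hWd _)).add ((hd_ev1 W hW2 (0, 1, 0) a y t).const_mul c)
    exact (hd1 L a y t (hLd _)).sub h2
  have rpD1 : ∀ a : ℝ, p1 (fun a b s => Lh a b s - Lt a b s) a y t
      = fderiv ℝ L (a, y, t) (1, 0, 0)
        - (fderiv ℝ W (a, y, t) (1, 0, 0)
          + c * fderiv ℝ (fderiv ℝ W) (a, y, t) (1, 0, 0) (0, 1, 0)) :=
    fun a => (hB a).deriv
  have hmix : ∀ a : ℝ, fderiv ℝ (fderiv ℝ W) (a, y, t) (1, 0, 0) (0, 1, 0)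
      = fderiv ℝ G1 (a, y, t) (0, 1, 0) := by
    intro a
    rw [symm2 W hW2, ← fderiv_ev W hW2 (1, 0, 0) (a, y, t) (0, 1, 0)]
  have eqB : p11 (fun a b s => Lh a b s - Lt a b s) x y t
      = fderiv ℝ (fderiv ℝ L) (x, y, t) (1, 0, 0) (1, 0, 0)
        - (fderiv ℝ (fderiv ℝ W) (x, y, t) (1, 0, 0) (1, 0, 0)
          + c * fderiv ℝ (fderiv ℝ G1) (x, y, t) (1, 0, 0) (0, 1, 0)) := by
    have hfun : (fun a => p1 (fun a b s => Lh a b s - Lt a b s) a y t)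
        = fun a => fderiv ℝ L (a, y, t) (1, 0, 0)
          - (fderiv ℝ W (a, y, t) (1, 0, 0)
            + c * fderiv ℝ G1 (a, y, t) (0, 1, 0)) := by
      funext a; rw [rpD1 a, hmix a]
    show deriv (fun a => p1 (fun a b s => Lh a b s - Lt a b s) a y t) x = _
    rw [hfun]
    exact ((hd_ev1 L hLh (1, 0, 0) x y t).sub
      ((hd_ev1 W hW2 (1, 0, 0) x y t).add
        ((hd_ev1 G1 hG1 (0, 1, 0) x y t).const_mul c))).deriv
  -- derivative values of p1 Lh, p2 Lh in the y direction
  have hu : HasDerivAt (fun b => p1 Lh x b t)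
      (fderiv ℝ (fderiv ℝ L) (x, y, t) (0, 1, 0) (1, 0, 0)) y := by
    have hfun : (fun b => p1 Lh x b t) = fun b => fderiv ℝ L (x, b, t) (1, 0, 0) :=
      funext fun b => rp1L x b t
    rw [hfun]; exact hd_ev2 L hLh (1, 0, 0) x y t
  have hv : HasDerivAt (fun b => p2 Lh x b t)
      (fderiv ℝ (fderiv ℝ L) (x, y, t) (0, 1, 0) (0, 1, 0)) y := by
    have hfun : (fun b => p2 Lh x b t) = fun b => fderiv ℝ L (x, b, t) (0, 1, 0) :=
      funext fun b => rp2L x b t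
    rw [hfun]; exact hd_ev2 L hLh (0, 1, 0) x y t
  have rp12L : p12 Lh x y t = fderiv ℝ (fderiv ℝ L) (x, y, t) (0, 1, 0) (1, 0, 0) := hu.deriv
  have rp22L : p22 Lh x y t = fderiv ℝ (fderiv ℝ L) (x, y, t) (0, 1, 0) (0, 1, 0) := hv.deriv
  -- Part C : differentiate the w-PDE in y
  have hClhs : HasDerivAt (fun b => p3 wh x b t + σ x ^ 2 / 2 * p11 wh x b t)
      (fderiv ℝ (fderiv ℝ W) (x, y, t) (0, 1, 0) (0, 0, 1)
        + σ x ^ 2 / 2 * fderiv ℝ (fderiv ℝ G1) (x, y, t) (0, 1, 0) (1, 0, 0)) y := by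
    have hf1 : (fun b => p3 wh x b t) = fun b => fderiv ℝ W (x, b, t) (0, 0, 1) :=
      funext fun b => rp3w x b t
    have hf2 : (fun b => p11 wh x b t) = fun b => fderiv ℝ G1 (x, b, t) (1, 0, 0) :=
      funext fun b => rp11w x b t
    have h1 : HasDerivAt (fun b => p3 wh x b t)
        (fderiv ℝ (fderiv ℝ W) (x, y, t) (0, 1, 0) (0, 0, 1)) y := by
      rw [hf1]; exact hd_ev2 W hW2 (0, 0, 1) x y t
    have h2 : HasDerivAt (fun b => p11 wh x b t)
        (fderiv ℝ (fderiv ℝ G1) (x, y, t) (0, 1, 0) (1, 0, 0)) y := by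
      rw [hf2]; exact hd_ev2 G1 hG1 (1, 0, 0) x y t
    exact h1.add (h2.const_mul _)
  have hCrhs : HasDerivAt (fun b => σ x ^ 2 / (2 * c) * p1 Lh x b t ^ 2 / p2 Lh x b t)
      ((σ x ^ 2 / (2 * c)
          * (2 * p1 Lh x y t ^ 1 * fderiv ℝ (fderiv ℝ L) (x, y, t) (0, 1, 0) (1, 0, 0))
          * p2 Lh x y t
        - σ x ^ 2 / (2 * c) * p1 Lh x y t ^ 2
          * fderiv ℝ (fderiv ℝ L) (x, y, t) (0, 1, 0) (0, 1, 0))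
        / p2 Lh x y t ^ 2) y :=
    (((hu.pow 2).const_mul (σ x ^ 2 / (2 * c))).div hv (hLy x y t))
  have keyC : fderiv ℝ (fderiv ℝ W) (x, y, t) (0, 1, 0) (0, 0, 1)
      + σ x ^ 2 / 2 * fderiv ℝ (fderiv ℝ G1) (x, y, t) (0, 1, 0) (1, 0, 0)
      = (σ x ^ 2 / (2 * c)
          * (2 * p1 Lh x y t ^ 1 * fderiv ℝ (fderiv ℝ L) (x, y, t) (0, 1, 0) (1, 0, 0))
          * p2 Lh x y t
        - σ x ^ 2 / (2 * c) * p1 Lh x y t ^ 2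
          * fderiv ℝ (fderiv ℝ L) (x, y, t) (0, 1, 0) (0, 1, 0))
        / p2 Lh x y t ^ 2 := by
    have hfun : (fun b => p3 wh x b t + σ x ^ 2 / 2 * p11 wh x b t)
        = fun b => σ x ^ 2 / (2 * c) * p1 Lh x b t ^ 2 / p2 Lh x b t :=
      funext fun b => hPDEw x b t
    exact (hfun ▸ hClhs).unique hCrhs
  -- Part D : w-PDE at the point, rewritten
  have keyD : fderiv ℝ W (x, y, t) (0, 0, 1)
      + σ x ^ 2 / 2 * fderiv ℝ (fderiv ℝ W) (x, y, t) (1, 0, 0) (1, 0, 0)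
      = σ x ^ 2 / (2 * c) * p1 Lh x y t ^ 2 / p2 Lh x y t := by
    have := hPDEw x y t
    rw [rp3w x y t, rp11w x y t, fderiv_ev W hW2 (1, 0, 0) (x, y, t) (1, 0, 0)] at this
    exact this
  -- symmetry bridges
  have symA : fderiv ℝ (fderiv ℝ W) (x, y, t) (0, 0, 1) (0, 1, 0)
      = fderiv ℝ (fderiv ℝ W) (x, y, t) (0, 1, 0) (0, 0, 1) := symm2 W hW2 _ _ _
  have symB : fderiv ℝ (fderiv ℝ G1) (x, y, t) (1, 0, 0) (0, 1, 0)
      = fderiv ℝ (fderiv ℝ G1) (x, y, t) (0, 1, 0) (1, 0, 0) := symm2 G1 hG1 _ _ _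
  -- L-PDE at the point, rewritten
  have rp11L : p11 Lh x y t = fderiv ℝ (fderiv ℝ L) (x, y, t) (1, 0, 0) (1, 0, 0) := by
    have hfun : (fun a => p1 Lh a y t) = fun a => fderiv ℝ L (a, y, t) (1, 0, 0) :=
      funext fun a => rp1L a y t
    show deriv (fun a => p1 Lh a y t) x = _
    rw [hfun]; exact (hd_ev1 L hLh (1, 0, 0) x y t).deriv
  have rp3L : p3 Lh x y t = fderiv ℝ L (x, y, t) (0, 0, 1) :=
    (hd3 L x y t (hLd _)).deriv
  have hL := hPDEL x y t
  rw [rp3L, rp11L, rp12L, rp22L, rp1L x y t, rp2L x y t] at hL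
  rw [rp1L x y t, rp2L x y t] at keyC keyD
  -- final assembly
  rw [eqA, eqB, symA, symB]
  set A3 := fderiv ℝ L (x, y, t) (0, 0, 1)
  set A11 := fderiv ℝ (fderiv ℝ L) (x, y, t) (1, 0, 0) (1, 0, 0)
  set A12 := fderiv ℝ (fderiv ℝ L) (x, y, t) (0, 1, 0) (1, 0, 0)
  set A22 := fderiv ℝ (fderiv ℝ L) (x, y, t) (0, 1, 0) (0, 1, 0)
  set u := fderiv ℝ L (x, y, t) (1, 0, 0)
  set v := fderiv ℝ L (x, y, t) (0, 1, 0)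
  set B3 := fderiv ℝ W (x, y, t) (0, 0, 1)
  set B11 := fderiv ℝ (fderiv ℝ W) (x, y, t) (1, 0, 0) (1, 0, 0)
  set T1 := fderiv ℝ (fderiv ℝ W) (x, y, t) (0, 1, 0) (0, 0, 1)
  set T2 := fderiv ℝ (fderiv ℝ G1) (x, y, t) (0, 1, 0) (1, 0, 0)
  have hv0 : v ≠ 0 := by
    rw [show v = p2 Lh x y t from (rp2L x y t).symm]; exact hLy x y t
  have hc0 : c ≠ 0 := ne_of_gt hc
  have h1 : A3 + σ x ^ 2 / 2 * A11 - (B3 + σ x ^ 2 / 2 * B11)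
      - c * (T1 + σ x ^ 2 / 2 * T2) = 0 := by
    rw [keyC, keyD]
    field_simp at hL ⊢
    have hL2 : 4 * c * A3 * v ^ 2 + 2 * c * σ x ^ 2 * A11 * v ^ 2
        - 4 * c * σ x ^ 2 * u * A12 * v + 2 * c * σ x ^ 2 * u ^ 2 * A22
        - 2 * σ x ^ 2 * u ^ 2 * v = 0 := by
      have hmul : v ^ 2 * (4 * c * A3 * v ^ 2 + 2 * c * σ x ^ 2 * A11 * v ^ 2
          - 4 * c * σ x ^ 2 * u * A12 * v + 2 * c * σ x ^ 2 * u ^ 2 * A22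
          - 2 * σ x ^ 2 * u ^ 2 * v) = v ^ 2 * 0 := by
        linear_combination (2 * v ^ 2) * hL
      exact mul_left_cancel₀ (pow_ne_zero 2 hv0) hmul
    linear_combination hL2 / 2
  linear_combination h1
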